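/- Let f(x,y) = (x + y, x/(y−1)) and V(x,y) = (−2y² + 2x + y + 1)/(xy(x+y)). Then V(f(x,y)) = −V(x,y) wherever defined, and consequently W = V² is a first integral of f. -/
import Mathlib


theorem stmt_14 (x y : ℂ) (h1 : y - 1 ≠ 0) (hx : x ≠ 0) (hy : y ≠ 0)
    (hxy : x + y ≠ 0) (h2 : x / (y - 1) ≠ 0)
    (h3 : x + y + x / (y - 1) ≠ 0) :
    let V : ℂ → ℂ → ℂ := fun u v =>
      (-2 * v ^ 2 + 2 * u + v + 1) / (u * v * (u + v))
    V (x + y) (x / (y - 1)) = -V x y ∧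
      (V (x + y) (x / (y - 1))) ^ 2 = (V x y) ^ 2 := by
  intro V
  have key : V (x + y) (x / (y - 1)) = -V x y := by
    show (-2 * (x / (y - 1)) ^ 2 + 2 * (x + y) + x / (y - 1) + 1) /
        ((x + y) * (x / (y - 1)) * (x + y + x / (y - 1))) =
      -((-2 * y ^ 2 + 2 * x + y + 1) / (x * y * (x + y)))
    rw [← neg_div, div_eq_div_iff (by exact mul_ne_zero (mul_ne_zero hxy h2) h3)
      (by exact mul_ne_zero (mul_ne_zero hx hy) hxy)]
    field_simp
    ring
  refine ⟨key, ?_⟩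
  rw [key]; ring
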